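/- Let R = F2[U] and let C1, C2 be chain complexes of R-modules. Suppose f : C1 → C2 is a chain isomorphism (or more generally a quasi-isomorphism), and τ1 : C1 → C1, τ2 : C2 → C2 are chain maps such that f ∘ τ1 is chain homotopic to τ2 ∘ f. Then the induced map on mapping cones Cone(Q·(id + τ1) : C1 → Q·C1) → Cone(Q·(id + τ2) : C2 → Q·C2), defined using f on both factors together with the chain homotopy on the off-diagonal, is a quasi-isomorphism. -/

import Mathlib

open Polynomial

/-- The ring `R = F2[U]`. -/
abbrev R2 : Type := Polynomial (ZMod 2)

/-- `f` is a quasi-isomorphism between the chain complexes `(M, dM)` and `(N, dN)`: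
the induced map on homology is surjective and injective (stated elementwise). -/
def IsQuasiIso {M N : Type} [AddCommGroup M] [Module R2 M] [AddCommGroup N] [Module R2 N]
    (dM : M →ₗ[R2] M) (dN : N →ₗ[R2] N) (f : M →ₗ[R2] N) : Prop :=
  (∀ y : N, dN y = 0 → ∃ x : M, dM x = 0 ∧ ∃ w : N, y + f x = dN w) ∧
  (∀ x : M, dM x = 0 → (∃ w : N, f x = dN w) → ∃ v : M, x = dM v)

/-- The mapping cone of `Q·(id + τ) : C → Q·C`, where `Q` is a formal variable with
`Q² = 0`: the underlying module is `C ⊕ Q·C[-1]` and the differential is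
`(x, Qy) ↦ (dx, Q((id + τ)x + dy))` (coefficients have characteristic 2, so signs
are irrelevant). -/
noncomputable def coneD {M : Type} [AddCommGroup M] [Module R2 M] (d τ : M →ₗ[R2] M) :
    M × M →ₗ[R2] M × M :=
  LinearMap.prod (d ∘ₗ LinearMap.fst R2 M M)
    ((LinearMap.id + τ) ∘ₗ LinearMap.fst R2 M M + d ∘ₗ LinearMap.snd R2 M M)

lemma char2R : (2 : R2) = 0 := by
  exact_mod_cast CharP.cast_eq_zero R2 2

lemma char2 {M : Type} [AddCommGroup M] [Module R2 M] (m : M) : m + m = 0 := by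
  have h : (2 : R2) • m = 0 := by rw [char2R, zero_smul]
  simpa [two_smul] using h

lemma neg_eq2 {M : Type} [AddCommGroup M] [Module R2 M] (m : M) : -m = m :=
  neg_eq_of_add_eq_zero_left (char2 m)

lemma eq_of_add_eq_zero2 {M : Type} [AddCommGroup M] [Module R2 M] {a b : M}
    (h : a + b = 0) : a = b := by
  rw [← neg_eq_of_add_eq_zero_left h, neg_eq2]

lemma add_eq_zero2 {M : Type} [AddCommGroup M] [Module R2 M] {a b : M}
    (h : a = b) : a + b = 0 := by rw [h]; exact char2 b

/-- If `f : C1 → C2` is a quasi-isomorphism of chain complexes of `F2[U]`-modules,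
`τ1, τ2` are chain maps, and `f ∘ τ1 ≃ τ2 ∘ f` via a chain homotopy `H`, then the
induced map on the mapping cones `Cone(Q(id + τ1)) → Cone(Q(id + τ2))`, defined
using `f` on both factors and `H` on the off-diagonal, is a quasi-isomorphism. -/
theorem stmt0 {M N : Type} [AddCommGroup M] [Module R2 M] [AddCommGroup N] [Module R2 N]
    (dM : M →ₗ[R2] M) (dN : N →ₗ[R2] N)
    (hdM : dM ∘ₗ dM = 0) (hdN : dN ∘ₗ dN = 0)
    (τ1 : M →ₗ[R2] M) (τ2 : N →ₗ[R2] N)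
    (hτ1 : τ1 ∘ₗ dM = dM ∘ₗ τ1) (hτ2 : τ2 ∘ₗ dN = dN ∘ₗ τ2)
    (f : M →ₗ[R2] N) (hf : f ∘ₗ dM = dN ∘ₗ f)
    (hfq : IsQuasiIso dM dN f)
    (H : M →ₗ[R2] N)
    (hH : f ∘ₗ τ1 + τ2 ∘ₗ f = dN ∘ₗ H + H ∘ₗ dM) :
    IsQuasiIso (coneD dM τ1) (coneD dN τ2)
      (LinearMap.prod (f ∘ₗ LinearMap.fst R2 M M)
        (f ∘ₗ LinearMap.snd R2 M M + H ∘ₗ LinearMap.fst R2 M M)) := by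
  have hdM' : ∀ x, dM (dM x) = 0 := fun x => by simpa using LinearMap.congr_fun hdM x
  have hdN' : ∀ y, dN (dN y) = 0 := fun y => by simpa using LinearMap.congr_fun hdN y
  have hτ1' : ∀ x, τ1 (dM x) = dM (τ1 x) := fun x => by simpa using LinearMap.congr_fun hτ1 x
  have hτ2' : ∀ y, τ2 (dN y) = dN (τ2 y) := fun y => by simpa using LinearMap.congr_fun hτ2 y
  have hf' : ∀ x, f (dM x) = dN (f x) := fun x => by simpa using LinearMap.congr_fun hf x
  have hH' : ∀ x, f (τ1 x) + τ2 (f x) = dN (H x) + H (dM x) := fun x => by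
    simpa using LinearMap.congr_fun hH x
  obtain ⟨hsurj, hinj⟩ := hfq
  constructor
  · -- surjectivity
    rintro ⟨y1, y2⟩ hy
    simp only [coneD, LinearMap.prod_apply, LinearMap.coe_comp, Function.comp_apply,
      LinearMap.fst_apply, LinearMap.snd_apply, LinearMap.add_apply, LinearMap.id_apply,
      Function.prod, Prod.mk.injEq, Prod.mk_eq_zero] at hy
    obtain ⟨hy1, hy2⟩ := hy
    -- hy1 : dN y1 = 0, hy2 : y1 + τ2 y1 + dN y2 = 0
    obtain ⟨x1, hx1, w1, hw1⟩ := hsurj y1 hy1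
    -- hx1 : dM x1 = 0, hw1 : y1 + f x1 = dN w1
    have e1 : dN y2 = y1 + τ2 y1 := (eq_of_add_eq_zero2 hy2).symm
    have e3 : dN (H x1) = f (τ1 x1) + τ2 (f x1) := by
      have h := hH' x1; rw [hx1, map_zero, add_zero] at h; exact h.symm
    have e4 : dN w1 = y1 + f x1 := hw1.symm
    have e5 : dN (τ2 w1) = τ2 y1 + τ2 (f x1) := by
      rw [← hτ2' w1, e4, map_add]
    have hzc : dM (x1 + τ1 x1) = 0 := by
      rw [map_add, hx1, ← hτ1', hx1, map_zero, add_zero]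
    have hzb : f (x1 + τ1 x1) = dN (y2 + w1 + τ2 w1 + H x1) := by
      apply eq_of_add_eq_zero2
      rw [map_add f, map_add dN, map_add dN, map_add dN, e1, e3, e4, e5]
      abel_nf
      simp [two_smul, char2, smul_add]
    obtain ⟨v, hv⟩ := hinj (x1 + τ1 x1) hzc ⟨_, hzb⟩
    have e2 : dN (f v) = f x1 + f (τ1 x1) := by
      rw [← hf', ← hv, map_add]
    have hcc : dN (y2 + f v + H x1 + w1 + τ2 w1) = 0 := by
      rw [map_add, map_add, map_add, map_add, e1, e2, e3, e4, e5]
      abel_nf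
      simp [two_smul, char2, smul_add]
    obtain ⟨u, hu, w2, hw2⟩ := hsurj _ hcc
    -- hw2 : y2 + f v + H x1 + w1 + τ2 w1 + f u = dN w2
    have hfu : f u = y2 + f v + H x1 + w1 + τ2 w1 + dN w2 := by
      apply eq_of_add_eq_zero2
      calc f u + (y2 + f v + H x1 + w1 + τ2 w1 + dN w2)
          = (y2 + f v + H x1 + w1 + τ2 w1 + f u) + dN w2 := by abel
        _ = dN w2 + dN w2 := by rw [hw2]
        _ = 0 := char2 _
    refine ⟨(x1, v + u), ?_, (w1, w2), ?_⟩
    · simp only [coneD, LinearMap.prod_apply, LinearMap.coe_comp, Function.comp_apply,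
        LinearMap.fst_apply, LinearMap.snd_apply, LinearMap.add_apply, LinearMap.id_apply,
        Function.prod, Prod.mk_eq_zero]
      refine ⟨hx1, ?_⟩
      rw [map_add, ← hv, hu, add_zero]
      exact char2 _
    · simp only [coneD, LinearMap.prod_apply, LinearMap.coe_comp, Function.comp_apply,
        LinearMap.fst_apply, LinearMap.snd_apply, LinearMap.add_apply, LinearMap.id_apply,
        Function.prod, Prod.mk.injEq, Prod.ext_iff, Prod.fst_add, Prod.snd_add]
      refine ⟨hw1, ?_⟩
      apply eq_of_add_eq_zero2
      rw [map_add f, hfu]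
      abel_nf
      simp [two_smul, char2, smul_add]
  · -- injectivity
    rintro ⟨x1, x2⟩ hx ⟨⟨w1, w2⟩, hw⟩
    simp only [coneD, LinearMap.prod_apply, LinearMap.coe_comp, Function.comp_apply,
      LinearMap.fst_apply, LinearMap.snd_apply, LinearMap.add_apply, LinearMap.id_apply,
      Function.prod, Prod.mk.injEq, Prod.mk_eq_zero] at hx hw
    obtain ⟨hx1, hx2⟩ := hx
    -- hx1 : dM x1 = 0, hx2 : x1 + τ1 x1 + dM x2 = 0
    obtain ⟨hw1, hw2⟩ := hw
    -- hw1 : f x1 = dN w1, hw2 : f x2 + H x1 = w1 + τ2 w1 + dN w2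
    obtain ⟨v0, hv0⟩ := hinj x1 hx1 ⟨w1, hw1⟩
    have hsc : dN (w1 + f v0) = 0 := by
      rw [map_add, ← hf', ← hv0, ← hw1]
      exact char2 _
    obtain ⟨p, hp, q, hq⟩ := hsurj (w1 + f v0) hsc
    -- hp : dM p = 0, hq : w1 + f v0 + f p = dN q
    have hv1 : x1 = dM (v0 + p) := by rw [map_add, hp, add_zero, ← hv0]
    have hqs : dN q = w1 + f (v0 + p) := by
      rw [← hq, map_add f]; abel
    have hdx2 : dM x2 = x1 + τ1 x1 := (eq_of_add_eq_zero2 hx2).symm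
    have hac : dM (x2 + (v0 + p) + τ1 (v0 + p)) = 0 := by
      rw [map_add, map_add, hdx2, ← hτ1' (v0 + p), ← hv1, hv1]
      abel_nf
      simp [two_smul, char2, smul_add]
    have eH : dN (H (v0 + p)) = f (τ1 (v0 + p)) + τ2 (f (v0 + p)) + H x1 := by
      have h := hH' (v0 + p)
      rw [← hv1] at h
      apply eq_of_add_eq_zero2
      calc dN (H (v0 + p)) + (f (τ1 (v0 + p)) + τ2 (f (v0 + p)) + H x1)
          = (f (τ1 (v0 + p)) + τ2 (f (v0 + p))) + (dN (H (v0 + p)) + H x1) := by abel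
        _ = (dN (H (v0 + p)) + H x1) + (dN (H (v0 + p)) + H x1) := by rw [h]
        _ = 0 := char2 _
    have hfx2 : f x2 = w1 + τ2 w1 + dN w2 + H x1 := by
      apply eq_of_add_eq_zero2
      calc f x2 + (w1 + τ2 w1 + dN w2 + H x1)
          = (f x2 + H x1) + (w1 + τ2 w1 + dN w2) := by abel
        _ = (w1 + τ2 w1 + dN w2) + (w1 + τ2 w1 + dN w2) := by rw [hw2]
        _ = 0 := char2 _
    have hab : f (x2 + (v0 + p) + τ1 (v0 + p)) = dN (q + τ2 q + w2 + H (v0 + p)) := by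
      apply eq_of_add_eq_zero2
      rw [map_add f, map_add f, map_add dN, map_add dN, map_add dN, eH,
        ← hτ2' q, hqs, map_add τ2, hfx2]
      abel_nf
      simp [two_smul, char2, smul_add]
    obtain ⟨v2, hv2⟩ := hinj _ hac ⟨_, hab⟩
    refine ⟨(v0 + p, v2), ?_⟩
    simp only [coneD, LinearMap.prod_apply, LinearMap.coe_comp, Function.comp_apply,
      LinearMap.fst_apply, LinearMap.snd_apply, LinearMap.add_apply, LinearMap.id_apply,
      Function.prod, Prod.mk.injEq, Prod.ext_iff]
    refine ⟨hv1, ?_⟩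
    apply eq_of_add_eq_zero2
    rw [← hv2]
    abel_nf
    simp [two_smul, char2, smul_add]
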